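/- Schur complement step: Let B_u ∈ ℝ^{q_4×q_3}, B_w ∈ ℝ^{q_4×n_w}, y_0, r ∈ ℝ^{q_4}, let Q̄ ∈ ℝ^{q_4×q_4} and R̄ ∈ ℝ^{q_3×q_3} be symmetric positive semidefinite with K := R̄ + B_u^⊤Q̄B_u positive definite, let A_w be a symmetric (1+n_w)×(1+n_w) matrix, and let α ≥ 0, u ∈ ℝ^{q_3}, γ ∈ ℝ. Then the block matrix [[K^{−1}, [u, 0]],[[u, 0]^⊤, Q_g^a(u, γ) − α A_w]] is positive semidefinite if and only if Q_g(u, γ) − α A_w is positive semidefinite, where [u, 0] ∈ ℝ^{q_3×(1+n_w)} denotes the matrix whose first column is u and whose remaining n_w columns are zero. -/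

import Mathlib

open Matrix

/-- The matrix `Q_g(u, γ)`. -/
noncomputable def Qg {q3 q4 nw : ℕ} (Bu : Matrix (Fin q4) (Fin q3) ℝ)
    (Bw : Matrix (Fin q4) (Fin nw) ℝ) (y0 r : Fin q4 → ℝ)
    (Qbar : Matrix (Fin q4) (Fin q4) ℝ) (Rbar : Matrix (Fin q3) (Fin q3) ℝ)
    (u : Fin q3 → ℝ) (γ : ℝ) : Matrix (Fin 1 ⊕ Fin nw) (Fin 1 ⊕ Fin nw) ℝ :=
  let z : Fin q4 → ℝ := Bu.mulVec u + y0 - r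
  Matrix.fromBlocks
    (Matrix.of fun _ _ => γ - u ⬝ᵥ Rbar.mulVec u - z ⬝ᵥ Qbar.mulVec z)
    (Matrix.of fun _ j => -(z ᵥ* (Qbar * Bw)) j)
    (Matrix.of fun i _ => -((Bwᵀ * Qbar).mulVec z) i)
    (-(Bwᵀ * Qbar * Bw))

/-- The matrix `Q_g^a(u, γ)`. -/
noncomputable def Qga {q3 q4 nw : ℕ} (Bu : Matrix (Fin q4) (Fin q3) ℝ)
    (Bw : Matrix (Fin q4) (Fin nw) ℝ) (y0 r : Fin q4 → ℝ)
    (Qbar : Matrix (Fin q4) (Fin q4) ℝ)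
    (u : Fin q3 → ℝ) (γ : ℝ) : Matrix (Fin 1 ⊕ Fin nw) (Fin 1 ⊕ Fin nw) ℝ :=
  let z : Fin q4 → ℝ := Bu.mulVec u + y0 - r
  Matrix.fromBlocks
    (Matrix.of fun _ _ => γ - Bu.mulVec u ⬝ᵥ Qbar.mulVec (y0 - r)
      - (y0 - r) ⬝ᵥ Qbar.mulVec (Bu.mulVec u) - (y0 - r) ⬝ᵥ Qbar.mulVec (y0 - r))
    (Matrix.of fun _ j => -(z ᵥ* (Qbar * Bw)) j)
    (Matrix.of fun i _ => -((Bwᵀ * Qbar).mulVec z) i)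
    (-(Bwᵀ * Qbar * Bw))

/-- The matrix `[u, 0] ∈ ℝ^{q3 × (1 + nw)}` whose first column is `u` and whose
remaining columns are zero. -/
def uZero {q3 nw : ℕ} (u : Fin q3 → ℝ) : Matrix (Fin q3) (Fin 1 ⊕ Fin nw) ℝ :=
  Matrix.fromCols (Matrix.of fun i _ => u i) 0

/-- Schur complement step: the block matrix `[[K⁻¹, [u, 0]], [[u, 0]ᵀ, Q_g^a - α A_w]]`
is positive semidefinite iff `Q_g - α A_w` is positive semidefinite. -/
theorem schur_complement_step {q3 q4 nw : ℕ}
    (Bu : Matrix (Fin q4) (Fin q3) ℝ) (Bw : Matrix (Fin q4) (Fin nw) ℝ)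
    (y0 r : Fin q4 → ℝ)
    (Qbar : Matrix (Fin q4) (Fin q4) ℝ) (Rbar : Matrix (Fin q3) (Fin q3) ℝ)
    (hQ : Qbar.PosSemidef) (hR : Rbar.PosSemidef)
    (hK : (Rbar + Buᵀ * Qbar * Bu).PosDef)
    (Aw : Matrix (Fin 1 ⊕ Fin nw) (Fin 1 ⊕ Fin nw) ℝ) (hAw : Aw.IsSymm)
    (α : ℝ) (hα : 0 ≤ α) (u : Fin q3 → ℝ) (γ : ℝ) :
    (Matrix.fromBlocks (Rbar + Buᵀ * Qbar * Bu)⁻¹ (uZero u) (uZero u)ᵀ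
        (Qga Bu Bw y0 r Qbar u γ - α • Aw)).PosSemidef ↔
    (Qg Bu Bw y0 r Qbar Rbar u γ - α • Aw).PosSemidef := by
  classical
  set K := Rbar + Buᵀ * Qbar * Bu with hKdef
  have hKinv : K⁻¹.PosDef := hK.inv
  haveI : Invertible (K⁻¹) := hKinv.isUnit.invertible
  have hconj : ((uZero u : Matrix (Fin q3) (Fin 1 ⊕ Fin nw) ℝ))ᴴ = (uZero u)ᵀ := by
    ext i j; simp [Matrix.conjTranspose_apply]
  have hKK : K⁻¹⁻¹ = K :=
    Matrix.nonsing_inv_nonsing_inv _ ((Matrix.isUnit_iff_isUnit_det _).1 hK.isUnit)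
  rw [← hconj, Matrix.PosDef.fromBlocks₁₁ (uZero u) _ hKinv, hKK, hconj]
  have hprod : (uZero u : Matrix (Fin q3) (Fin 1 ⊕ Fin nw) ℝ)ᵀ * K * uZero u
      = (Matrix.fromBlocks (Matrix.of fun _ _ => u ⬝ᵥ K.mulVec u) 0 0 0 :
          Matrix (Fin 1 ⊕ Fin nw) (Fin 1 ⊕ Fin nw) ℝ) := by
    rw [uZero, Matrix.transpose_fromCols, Matrix.transpose_zero, Matrix.fromRows_mul,
      Matrix.zero_mul, Matrix.fromRows_mul_fromCols, Matrix.zero_mul, Matrix.zero_mul,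
      Matrix.mul_zero]
    ext i j
    rcases i with i | i <;> rcases j with j | j
    · simp only [Matrix.fromBlocks_apply₁₁, Matrix.of_apply]
      rw [Matrix.mul_apply]
      simp only [Matrix.mul_apply, Matrix.of_apply, Matrix.transpose_apply, dotProduct,
        Matrix.mulVec, Finset.sum_mul, Finset.mul_sum]
      rw [Finset.sum_comm]
      exact Finset.sum_congr rfl fun a _ => Finset.sum_congr rfl fun b _ => by ring
    · rfl
    · rfl
    · rfl
  have hmain : Qga Bu Bw y0 r Qbar u γ - (uZero u)ᵀ * K * uZero u
      = Qg Bu Bw y0 r Qbar Rbar u γ := by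
    rw [hprod]
    have hz : Bu.mulVec u + y0 - r = Bu.mulVec u + (y0 - r) := add_sub_assoc _ _ _
    have h2 : u ⬝ᵥ K.mulVec u
        = u ⬝ᵥ Rbar.mulVec u + Bu.mulVec u ⬝ᵥ Qbar.mulVec (Bu.mulVec u) := by
      rw [hKdef, Matrix.add_mulVec, dotProduct_add]
      congr 1
      rw [← Matrix.mulVec_mulVec, ← Matrix.mulVec_mulVec, Matrix.dotProduct_mulVec,
        Matrix.vecMul_transpose]
    have h1 : (Bu.mulVec u + y0 - r) ⬝ᵥ Qbar.mulVec (Bu.mulVec u + y0 - r)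
        = Bu.mulVec u ⬝ᵥ Qbar.mulVec (Bu.mulVec u)
          + Bu.mulVec u ⬝ᵥ Qbar.mulVec (y0 - r)
          + (y0 - r) ⬝ᵥ Qbar.mulVec (Bu.mulVec u)
          + (y0 - r) ⬝ᵥ Qbar.mulVec (y0 - r) := by
      rw [hz, Matrix.mulVec_add, dotProduct_add, add_dotProduct, add_dotProduct]
      ring
    ext i j
    rcases i with i | i <;> rcases j with j | j <;>
      simp [Qg, Qga, Matrix.fromBlocks, h1, h2] <;> ring
  rw [sub_right_comm, hmain]
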